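/- For a quadratic polynomial p(x) = ½ xᵀQx + qᵀx + c with Q symmetric, quasiconvexity is equivalent to convexity, which is equivalent to Q being positive semidefinite. -/

import Mathlib

open Matrix

private lemma bilin_symm {n : ℕ} {Q : Matrix (Fin n) (Fin n) ℝ} (hQ : Q.IsSymm)
    (x y : Fin n → ℝ) : x ⬝ᵥ Q.mulVec y = y ⬝ᵥ Q.mulVec x := by
  rw [dotProduct_mulVec, dotProduct_comm, ← mulVec_transpose, hQ.eq]

theorem stmt_11 (n : ℕ) (Q : Matrix (Fin n) (Fin n) ℝ) (hQ : Q.IsSymm)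
    (q : Fin n → ℝ) (c : ℝ)
    (p : (Fin n → ℝ) → ℝ)
    (hp : ∀ x, p x = (1 / 2) * (x ⬝ᵥ Q.mulVec x) + q ⬝ᵥ x + c) :
    ((∀ α : ℝ, Convex ℝ {x : Fin n → ℝ | p x ≤ α}) ↔ ConvexOn ℝ Set.univ p) ∧
    (ConvexOn ℝ Set.univ p ↔ Q.PosSemidef) := by
  -- PosSemidef → convex
  have h1 : Q.PosSemidef → ConvexOn ℝ Set.univ p := by
    intro hpsd
    refine ⟨convex_univ, fun x _ y _ a b ha hb hab => ?_⟩
    have hB := bilin_symm hQ x y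
    have key : 0 ≤ (x - y) ⬝ᵥ Q.mulVec (x - y) := by
      simpa using hpsd.dotProduct_mulVec_nonneg (x - y)
    have expand : (x - y) ⬝ᵥ Q.mulVec (x - y)
        = x ⬝ᵥ Q.mulVec x - 2 * (x ⬝ᵥ Q.mulVec y) + y ⬝ᵥ Q.mulVec y := by
      rw [sub_dotProduct, mulVec_sub, dotProduct_sub, dotProduct_sub, hB]; ring
    rw [hp, hp, hp]
    have e1 : (a • x + b • y) ⬝ᵥ Q.mulVec (a • x + b • y)
        = a ^ 2 * (x ⬝ᵥ Q.mulVec x) + 2 * (a * b) * (x ⬝ᵥ Q.mulVec y)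
          + b ^ 2 * (y ⬝ᵥ Q.mulVec y) := by
      rw [add_dotProduct, mulVec_add, mulVec_smul, mulVec_smul, dotProduct_add,
        dotProduct_add, smul_dotProduct, smul_dotProduct, smul_dotProduct,
        smul_dotProduct, dotProduct_smul, dotProduct_smul, dotProduct_smul,
        dotProduct_smul, hB]
      simp only [smul_eq_mul]; ring
    have e2 : q ⬝ᵥ (a • x + b • y) = a * (q ⬝ᵥ x) + b * (q ⬝ᵥ y) := by
      rw [dotProduct_add, dotProduct_smul, dotProduct_smul]; simp
    rw [e1, e2]
    have hab' : b = 1 - a := by linarith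
    subst hab'
    rw [expand] at key
    simp only [smul_eq_mul]
    nlinarith [mul_nonneg (mul_nonneg ha hb) key]
  -- convex → sublevels convex
  have h2 : ConvexOn ℝ Set.univ p → ∀ α : ℝ, Convex ℝ {x : Fin n → ℝ | p x ≤ α} := by
    intro hc α
    have := hc.convex_le α
    simpa using this
  -- sublevels convex → PosSemidef
  have h3 : (∀ α : ℝ, Convex ℝ {x : Fin n → ℝ | p x ≤ α}) → Q.PosSemidef := by
    intro hconv
    have herm : Q.IsHermitian := by
      rwa [Matrix.IsHermitian, conjTranspose_eq_transpose_of_trivial, ← Matrix.IsSymm]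
    refine Matrix.PosSemidef.of_dotProduct_mulVec_nonneg herm fun v => ?_
    by_contra hneg
    push_neg at hneg
    simp only [star_trivial] at hneg
    set d : ℝ := v ⬝ᵥ Q.mulVec v with hd
    set e : ℝ := q ⬝ᵥ v with he
    set t : ℝ := (2 * |e| + 1) / (-d) with ht
    have hdneg : d < 0 := hneg
    have htpos : 0 < t := div_pos (by positivity) (by linarith)
    have hval : ∀ s : ℝ, p (s • v) = (1/2) * d * s ^ 2 + e * s + c := by
      intro s
      rw [hp]
      rw [smul_dotProduct, mulVec_smul, dotProduct_smul, dotProduct_smul]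
      simp only [smul_eq_mul, hd, he]; ring
    have hkey : (1/2) * d * t ^ 2 + |e| * t < 0 := by
      have hdne : d ≠ 0 := ne_of_lt hdneg
      have : (1/2) * d * t + |e| = -(1/2 : ℝ) := by
        rw [ht]
        field_simp
        ring
      calc (1/2) * d * t ^ 2 + |e| * t = ((1/2) * d * t + |e|) * t := by ring
        _ = -(1/2) * t := by rw [this]
        _ < 0 := by nlinarith
    set α : ℝ := max (p (t • v)) (p ((-t) • v)) with hα
    have hmem1 : t • v ∈ {x : Fin n → ℝ | p x ≤ α} := by
      show p (t • v) ≤ α; exact le_max_left _ _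
    have hmem2 : (-t) • v ∈ {x : Fin n → ℝ | p x ≤ α} := by
      show p ((-t) • v) ≤ α; exact le_max_right _ _
    have hmid := hconv α hmem1 hmem2 (by norm_num : (0:ℝ) ≤ 1/2)
      (by norm_num : (0:ℝ) ≤ 1/2) (by norm_num)
    have hzero : (1/2 : ℝ) • (t • v) + (1/2 : ℝ) • ((-t) • v) = 0 := by
      have hs : (1/2 : ℝ) * t + (1/2 : ℝ) * (-t) = 0 := by ring
      rw [smul_smul, smul_smul, ← add_smul, hs, zero_smul]
    rw [hzero] at hmid
    have hp0 : p 0 = c := by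
      have := hval 0
      simpa using this
    have hle1 : p (t • v) < c := by
      rw [hval]
      have : e * t ≤ |e| * t := mul_le_mul_of_nonneg_right (le_abs_self e) htpos.le
      linarith
    have hle2 : p ((-t) • v) < c := by
      rw [hval]
      have : e * (-t) ≤ |e| * t := by
        have := neg_le_abs e
        nlinarith
      nlinarith
    have : α < c := max_lt hle1 hle2
    rw [Set.mem_setOf_eq, hp0] at hmid
    linarith
  exact ⟨⟨fun h => h1 (h3 h), h2⟩, ⟨fun h => h3 (h2 h), h1⟩⟩
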